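/- Let (R,P_Ω) and (R',P'_Ω) be multiple Rota-Baxter algebras of pair weight (λ_Ω,λ_Ω). Let (M,𝔪^R_Ω,𝔪^{R'}_Ω) be an (R,P_Ω)-(R',P'_Ω)-bimodule and (N,𝔫^R_Ω) a left (R,P_Ω)-module. Then Hom_{(R,P_Ω)}(M,N) is a left (R',P'_Ω)-module, where the R'-action is (r'φ)(m) := φ(mr') and the operators are 𝔮_ω(φ)(m) := φ(𝔪^{R'}_ω(m)). In particular: (i) for every left (R,P_Ω)-module homomorphism φ : M → N and every r' ∈ R', ω ∈ Ω, the maps r'φ and 𝔮_ω(φ) are again left (R,P_Ω)-module homomorphisms; and (ii) P'_α(r')·𝔮_β(φ) = 𝔮_α(r'·𝔮_β(φ)) + 𝔮_β(P'_α(r')·φ) + λ_β·𝔮_α(r'·φ) + λ_α·𝔮_β(r'·φ) for all r' ∈ R', α,β ∈ Ω. -/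
import Mathlib


open MulOpposite in
/-- If `(M, 𝔪^R_Ω, 𝔪^{R'}_Ω)` is an `(R, P_Ω)`-`(R', P'_Ω)`-bimodule
and `(N, 𝔫_Ω)` is a left `(R, P_Ω)`-module, then the set of left `(R, P_Ω)`-module
homomorphisms `Hom_{(R,P_Ω)}(M, N)` is a left `(R', P'_Ω)`-module with action
`(r'·φ)(m) := φ(m·r')` and operators `𝔮_ω(φ)(m) := φ(𝔪^{R'}_ω(m))`; in particular
`r'·φ` and `𝔮_ω(φ)` are again left `(R, P_Ω)`-module homomorphisms, and the multiple
Rota-Baxter module identity holds for the `𝔮_ω`. -/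
theorem hom_from_bimodule_is_left_multiple_rota_baxter_module
    (k : Type*) [CommRing k]
    (R : Type*) [Ring R] [Algebra k R]
    (R' : Type*) [Ring R'] [Algebra k R']
    (Ω : Type*) [Nonempty Ω]
    (lam : Ω → k)
    (P : Ω → R →ₗ[k] R)
    (hP : ∀ (α β : Ω) (r₁ r₂ : R),
      P α r₁ * P β r₂ =
        P α (r₁ * P β r₂) + P β (P α r₁ * r₂)
          + lam β • P α (r₁ * r₂) + lam α • P β (r₁ * r₂))
    (P' : Ω → R' →ₗ[k] R')
    (hP' : ∀ (α β : Ω) (r₁ r₂ : R'),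
      P' α r₁ * P' β r₂ =
        P' α (r₁ * P' β r₂) + P' β (P' α r₁ * r₂)
          + lam β • P' α (r₁ * r₂) + lam α • P' β (r₁ * r₂))
    -- `M` is an `(R, P_Ω)`-`(R', P'_Ω)`-bimodule
    (M : Type*) [AddCommGroup M] [Module k M] [Module R M] [Module R'ᵐᵒᵖ M]
    [IsScalarTower k R M] [IsScalarTower k R'ᵐᵒᵖ M]
    [SMulCommClass R R'ᵐᵒᵖ M] [SMulCommClass R'ᵐᵒᵖ R M]
    (mR : Ω → M →ₗ[k] M) (mR' : Ω → M →ₗ[k] M)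
    (hMl : ∀ (α β : Ω) (x : R) (m : M),
      P α x • mR β m =
        mR α (x • mR β m) + mR β (P α x • m)
          + lam β • mR α (x • m) + lam α • mR β (x • m))
    (hMr : ∀ (α β : Ω) (x : R') (m : M),
      mR' β (op (P' α x) • m) =
        mR' β (op x • mR' α m) + op (P' α x) • mR' β m
          + lam β • (op x • mR' α m) + lam α • (op x • mR' β m))
    (hcomp₁ : ∀ (ω : Ω) (r : R) (m : M), mR' ω (r • m) = r • mR' ω m)
    (hcomp₂ : ∀ (ω : Ω) (r' : R') (m : M), mR ω (op r' • m) = op r' • mR ω m)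
    (hcomp₃ : ∀ (ω τ : Ω) (m : M), mR' ω (mR τ m) = mR τ (mR' ω m))
    -- `N` is a left `(R, P_Ω)`-module
    (N : Type*) [AddCommGroup N] [Module k N] [Module R N] [IsScalarTower k R N]
    (nOp : Ω → N →ₗ[k] N)
    (hN : ∀ (α β : Ω) (x : R) (n : N),
      P α x • nOp β n =
        nOp α (x • nOp β n) + nOp β (P α x • n)
          + lam β • nOp α (x • n) + lam α • nOp β (x • n)) :
    -- the homomorphisms form an abelian subgroup of `Hom_R(M, N)`
    (∃ H : AddSubgroup (M →ₗ[R] N),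
      (H : Set (M →ₗ[R] N)) =
        {φ : M →ₗ[R] N | ∀ (ω : Ω) (m : M), φ (mR ω m) = nOp ω (φ m)}) ∧
    ∀ φ : M →ₗ[R] N, (∀ (ω : Ω) (m : M), φ (mR ω m) = nOp ω (φ m)) →
      -- (i) `r'·φ`, with `(r'·φ)(m) = φ(m·r')`, is again a left `(R, P_Ω)`-module hom
      (∀ r' : R', ∃ ψ : M →ₗ[R] N,
        (∀ m : M, ψ m = φ (op r' • m)) ∧
        ∀ (τ : Ω) (m : M), ψ (mR τ m) = nOp τ (ψ m)) ∧
      -- (i) `𝔮_ω(φ)`, with `𝔮_ω(φ)(m) = φ(𝔪^{R'}_ω(m))`, is again such a hom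
      (∀ ω : Ω, ∃ ψ : M →ₗ[R] N,
        (∀ m : M, ψ m = φ (mR' ω m)) ∧
        ∀ (τ : Ω) (m : M), ψ (mR τ m) = nOp τ (ψ m)) ∧
      -- (ii) the multiple Rota-Baxter module identity for `𝔮_Ω`, pointwise
      (∀ (r' : R') (α β : Ω) (m : M),
        φ (mR' β (op (P' α r') • m)) =
          φ (mR' β (op r' • mR' α m)) + φ (op (P' α r') • mR' β m)
            + lam β • φ (op r' • mR' α m) + lam α • φ (op r' • mR' β m)) := by

  refine ⟨⟨AddSubgroup.mk (AddSubmonoid.mk (AddSubsemigroup.mk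
      {φ : M →ₗ[R] N | ∀ (ω : Ω) (m : M), φ (mR ω m) = nOp ω (φ m)} ?_) ?_) ?_, rfl⟩, ?_⟩
  · intro a b ha hb ω m
    simp [ha ω m, hb ω m]
  · intro ω m; simp
  · intro a ha ω m
    simp [ha ω m]
  intro φ hφ
  have hφk : ∀ (c : k) (m : M), φ (c • m) = c • φ m := by
    intro c m
    rw [← algebraMap_smul R c m, map_smul, algebraMap_smul]
  refine ⟨?_, ?_, ?_⟩
  · intro r'
    refine ⟨{ toFun := fun m => φ (op r' • m),
              map_add' := by intro a b; simp [smul_add],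
              map_smul' := by
                intro r m
                simp [smul_comm (op r') r m] }, fun m => rfl, ?_⟩
    intro τ m
    simp only [LinearMap.coe_mk, AddHom.coe_mk]
    rw [← hcomp₂, hφ]
  · intro ω
    refine ⟨{ toFun := fun m => φ (mR' ω m),
              map_add' := by intro a b; simp,
              map_smul' := by intro r m; simp [hcomp₁ ω r m] }, fun m => rfl, ?_⟩
    intro τ m
    simp only [LinearMap.coe_mk, AddHom.coe_mk]
    rw [hcomp₃, hφ]
  · intro r' α β m
    rw [hMr α β r' m]
    simp only [map_add, hφk]
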